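/- Let σ² > 0, let Z ~ N(0, σ²), and let X be a real random variable independent of Z with second moment E[X²] = ρ < ∞. Let Q denote the distribution of Y = X + Z and Q0 = N(0, σ²). Then D(Q ‖ Q0) ≥ ρ/(2σ²) − (1/2) log( (ρ + σ²)/σ² ). -/

import Mathlib

/-!
STATEMENT 18: Let `Z ~ N(0, σ²)` and let `X` be independent of `Z` with `E[X²] = ρ`.
Let `Q` be the law of `Y = X + Z` and `Q0 = N(0, σ²)`. Then
`D(Q ‖ Q0) ≥ ρ/(2σ²) − (1/2) log((ρ + σ²)/σ²)`.
-/

open MeasureTheory ProbabilityTheory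
open scoped ENNReal NNReal Classical

section Aux18
open Real

lemma aux_integrable_sq_mul_exp {b : ℝ} (hb : 0 < b) :
    Integrable (fun x : ℝ ↦ x ^ 2 * Real.exp (-b * x ^ 2)) := by
  have hbase := ((integrable_exp_neg_mul_sq (by positivity : (0:ℝ) < b/2)).const_mul (2 / b))
  refine hbase.mono' ?_ ?_
  · exact ((measurable_id.pow_const 2).mul
      (((measurable_id.pow_const 2).const_mul (-b)).exp)).aestronglyMeasurable
  · refine Filter.Eventually.of_forall fun x ↦ ?_
    have ht : (0:ℝ) ≤ b / 2 * x ^ 2 := by positivity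
    have h1 : b / 2 * x ^ 2 ≤ Real.exp (b / 2 * x ^ 2) := by
      have := Real.add_one_le_exp (b / 2 * x ^ 2); linarith
    have h2 : b / 2 * x ^ 2 * Real.exp (-(b / 2 * x ^ 2)) ≤ 1 := by
      rw [Real.exp_neg]
      calc b / 2 * x ^ 2 * (Real.exp (b / 2 * x ^ 2))⁻¹
          ≤ Real.exp (b / 2 * x ^ 2) * (Real.exp (b / 2 * x ^ 2))⁻¹ :=
            mul_le_mul_of_nonneg_right h1 (by positivity)
        _ = 1 := mul_inv_cancel₀ (Real.exp_pos _).ne'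
    have hx : x ^ 2 * Real.exp (-b * x ^ 2)
        ≤ 2 / b * Real.exp (-(b/2) * x ^ 2) := by
      have hsplit : Real.exp (-b * x ^ 2)
          = Real.exp (-(b / 2 * x ^ 2)) * Real.exp (-(b/2) * x ^ 2) := by
        rw [← Real.exp_add]; ring_nf
      rw [hsplit]
      calc x ^ 2 * (Real.exp (-(b / 2 * x ^ 2)) * Real.exp (-(b/2) * x ^ 2))
          = (2 / b) * (b / 2 * x ^ 2 * Real.exp (-(b / 2 * x ^ 2))) *
              Real.exp (-(b/2) * x ^ 2) := by field_simp
        _ ≤ (2 / b) * 1 * Real.exp (-(b/2) * x ^ 2) :=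
            mul_le_mul_of_nonneg_right
              (mul_le_mul_of_nonneg_left h2 (by positivity)) (Real.exp_pos _).le
        _ = 2 / b * Real.exp (-(b/2) * x ^ 2) := by ring
    have hnn : (0:ℝ) ≤ x ^ 2 * Real.exp (-b * x ^ 2) := by positivity
    rw [Real.norm_eq_abs, abs_of_nonneg hnn]
    exact hx

lemma aux_integral_sq_mul_exp {b : ℝ} (hb : 0 < b) :
    ∫ x : ℝ, x ^ 2 * Real.exp (-b * x ^ 2) = Real.sqrt (π / b) / (2 * b) := by
  have hu : ∀ x : ℝ, HasDerivAt (fun y : ℝ ↦ y) 1 x := fun x ↦ hasDerivAt_id x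
  have hv : ∀ x : ℝ, HasDerivAt (fun y : ℝ ↦ -(2*b)⁻¹ * Real.exp (-b * y^2))
      (x * Real.exp (-b * x ^ 2)) x := by
    intro x
    have h1 : HasDerivAt (fun y : ℝ ↦ -b * y ^ 2) (-b * (2 * x)) x := by
      simpa using ((hasDerivAt_pow 2 x).const_mul (-b))
    have h2 := (h1.exp).const_mul (-(2*b)⁻¹)
    refine h2.congr_deriv ?_
    have hbb : (2*b)⁻¹ * (2*b) = 1 := inv_mul_cancel₀ (by positivity)
    linear_combination (x * Real.exp (-b * x ^ 2)) * hbb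
  have hsq : Integrable (fun x : ℝ ↦ x * (x * Real.exp (-b * x ^ 2))) := by
    have := aux_integrable_sq_mul_exp hb
    refine this.congr (Filter.Eventually.of_forall fun x ↦ ?_)
    show x ^ 2 * Real.exp (-b * x ^ 2) = x * (x * Real.exp (-b * x ^ 2))
    rw [pow_two]; ring
  have huv' : Integrable ((fun y : ℝ ↦ y) * fun x ↦ x * Real.exp (-b * x ^ 2)) := hsq
  have hu'v : Integrable ((fun _ : ℝ ↦ (1:ℝ)) * fun y ↦ -(2*b)⁻¹ * Real.exp (-b * y^2)) := by
    have := (integrable_exp_neg_mul_sq hb).const_mul (-(2*b)⁻¹)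
    refine this.congr (Filter.Eventually.of_forall fun x ↦ ?_)
    simp [Pi.mul_apply]
  have huv : Integrable ((fun y : ℝ ↦ y) * fun y ↦ -(2*b)⁻¹ * Real.exp (-b * y^2)) := by
    have := (integrable_mul_exp_neg_mul_sq hb).const_mul (-(2*b)⁻¹)
    refine this.congr (Filter.Eventually.of_forall fun x ↦ ?_)
    simp [Pi.mul_apply]; ring
  have key := integral_mul_deriv_eq_deriv_mul_of_integrable (fun x _ => hu x) (fun x _ => hv x) huv' hu'v huv
  have h1 : ∫ x : ℝ, x * (x * Real.exp (-b * x ^ 2))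
      = - ∫ x : ℝ, 1 * (-(2*b)⁻¹ * Real.exp (-b * x^2)) := key
  have h2 : ∫ x : ℝ, x ^ 2 * Real.exp (-b * x ^ 2)
      = ∫ x : ℝ, x * (x * Real.exp (-b * x ^ 2)) := by
    congr 1; funext x; rw [pow_two]; ring
  rw [h2, h1]
  have h3 : ∀ x : ℝ, 1 * (-(2*b)⁻¹ * Real.exp (-b * x^2)) = -(2*b)⁻¹ * Real.exp (-b * x^2) := by
    intro x; ring
  simp_rw [h3]
  rw [integral_const_mul, integral_gaussian]
  ring

lemma aux_gaussian_integral_eq {v : ℝ≥0} (hv : v ≠ 0) (g : ℝ → ℝ) :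
    ∫ x, g x ∂(gaussianReal 0 v) = ∫ x, gaussianPDFReal 0 v x * g x := by
  rw [gaussianReal_of_var_ne_zero 0 hv]
  have h : (gaussianPDF 0 v) = fun x ↦ ((gaussianPDFReal 0 v x).toNNReal : ℝ≥0∞) := rfl
  rw [h, integral_withDensity_eq_integral_smul (measurable_gaussianPDFReal 0 v).real_toNNReal g]
  congr 1 with x
  simp [NNReal.smul_def, Real.coe_toNNReal _ (gaussianPDFReal_nonneg 0 v x)]

lemma aux_gaussian_integrable_iff {v : ℝ≥0} (hv : v ≠ 0) (g : ℝ → ℝ) :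
    Integrable g (gaussianReal 0 v) ↔ Integrable (fun x ↦ gaussianPDFReal 0 v x * g x) := by
  rw [gaussianReal_of_var_ne_zero 0 hv]
  have h : (gaussianPDF 0 v) = fun x ↦ ((gaussianPDFReal 0 v x).toNNReal : ℝ≥0∞) := rfl
  rw [h, integrable_withDensity_iff_integrable_smul (measurable_gaussianPDFReal 0 v).real_toNNReal]
  refine integrable_congr (Filter.Eventually.of_forall fun x ↦ ?_)
  simp [NNReal.smul_def, Real.coe_toNNReal _ (gaussianPDFReal_nonneg 0 v x)]

lemma aux_pdf_eq {v : ℝ≥0} (hv : v ≠ 0) (x : ℝ) :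
    gaussianPDFReal 0 v x = (Real.sqrt (2 * π * v))⁻¹ * Real.exp (-(2 * (v:ℝ))⁻¹ * x ^ 2) := by
  rw [gaussianPDFReal]
  congr 1
  have hvpos : (0:ℝ) < v := by exact_mod_cast pos_iff_ne_zero.mpr hv
  rw [sub_zero]
  congr 1
  field_simp


lemma aux_sq_integrable_gaussian {v : ℝ≥0} (hv : v ≠ 0) :
    Integrable (fun x : ℝ ↦ x ^ 2) (gaussianReal 0 v) := by
  have hvpos : (0:ℝ) < v := by exact_mod_cast pos_iff_ne_zero.mpr hv
  have hb : (0:ℝ) < (2 * (v:ℝ))⁻¹ := by positivity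
  rw [aux_gaussian_integrable_iff hv]
  have : Integrable (fun x : ℝ ↦ (Real.sqrt (2 * π * v))⁻¹ *
      (x ^ 2 * Real.exp (-(2 * (v:ℝ))⁻¹ * x ^ 2))) := (aux_integrable_sq_mul_exp hb).const_mul _
  refine this.congr (Filter.Eventually.of_forall fun x ↦ ?_)
  show (Real.sqrt (2 * π * v))⁻¹ * (x ^ 2 * Real.exp (-(2 * (v:ℝ))⁻¹ * x ^ 2))
      = gaussianPDFReal 0 v x * x ^ 2
  rw [aux_pdf_eq hv]; ring

lemma aux_sq_integral_gaussian {v : ℝ≥0} (hv : v ≠ 0) :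
    ∫ x, x ^ 2 ∂(gaussianReal 0 v) = (v : ℝ) := by
  have hvpos : (0:ℝ) < v := by exact_mod_cast pos_iff_ne_zero.mpr hv
  have hb : (0:ℝ) < (2 * (v:ℝ))⁻¹ := by positivity
  rw [aux_gaussian_integral_eq hv]
  have h1 : ∀ x : ℝ, gaussianPDFReal 0 v x * x ^ 2
      = (Real.sqrt (2 * π * v))⁻¹ * (x ^ 2 * Real.exp (-(2 * (v:ℝ))⁻¹ * x ^ 2)) := by
    intro x; rw [aux_pdf_eq hv]; ring
  simp_rw [h1]
  rw [integral_const_mul, aux_integral_sq_mul_exp hb]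
  have h2 : π / (2 * (v:ℝ))⁻¹ = 2 * π * v := by field_simp
  have h3 : (2 * ((2 * (v:ℝ))⁻¹) : ℝ) = (v:ℝ)⁻¹ := by field_simp
  rw [h2, h3]
  have h4 : Real.sqrt (2 * π * v) ≠ 0 := by
    refine Real.sqrt_ne_zero'.mpr ?_; positivity
  field_simp

lemma aux_id_integrable_gaussian {v : ℝ≥0} (hv : v ≠ 0) :
    Integrable (fun x : ℝ ↦ x) (gaussianReal 0 v) := by
  have h2 : MemLp (fun x : ℝ ↦ x) 2 (gaussianReal 0 v) :=
    (memLp_two_iff_integrable_sq aestronglyMeasurable_id).mpr (aux_sq_integrable_gaussian hv)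
  exact h2.integrable one_le_two

lemma aux_id_integral_gaussian {v : ℝ≥0} (hv : v ≠ 0) :
    ∫ x, x ∂(gaussianReal 0 v) = 0 := by
  have hmap : Measure.map (fun x : ℝ ↦ (-1 : ℝ) * x) (gaussianReal 0 v) = gaussianReal 0 v := by
    rw [gaussianReal_map_const_mul (-1 : ℝ)]
    congr 1
    · ring
    · ext; simp
  have hint := aux_id_integrable_gaussian hv
  have h1 : ∫ x, x ∂(gaussianReal 0 v)
      = ∫ x, x ∂(Measure.map (fun x : ℝ ↦ (-1 : ℝ) * x) (gaussianReal 0 v)) := by rw [hmap]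
  have h2 : ∫ x, x ∂(Measure.map (fun x : ℝ ↦ (-1 : ℝ) * x) (gaussianReal 0 v))
      = ∫ x, (-1 : ℝ) * x ∂(gaussianReal 0 v) :=
    integral_map (by fun_prop) aestronglyMeasurable_id
  rw [h2] at h1
  simp only [neg_one_mul] at h1
  rw [integral_neg] at h1
  linarith

lemma aux_exp_integrable_gaussian {v : ℝ≥0} (hv : v ≠ 0) {a : ℝ}
    (ha : a < (2 * (v:ℝ))⁻¹) :
    Integrable (fun x : ℝ ↦ Real.exp (a * x ^ 2)) (gaussianReal 0 v) := by
  have hvpos : (0:ℝ) < v := by exact_mod_cast pos_iff_ne_zero.mpr hv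
  have hb : (0:ℝ) < (2 * (v:ℝ))⁻¹ - a := by linarith
  rw [aux_gaussian_integrable_iff hv]
  have : Integrable (fun x : ℝ ↦ (Real.sqrt (2 * π * v))⁻¹ *
      Real.exp (-((2 * (v:ℝ))⁻¹ - a) * x ^ 2)) := (integrable_exp_neg_mul_sq hb).const_mul _
  refine this.congr (Filter.Eventually.of_forall fun x ↦ ?_)
  show (Real.sqrt (2 * π * v))⁻¹ * Real.exp (-((2 * (v:ℝ))⁻¹ - a) * x ^ 2)
      = gaussianPDFReal 0 v x * Real.exp (a * x ^ 2)
  rw [aux_pdf_eq hv]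
  conv_rhs => rw [mul_assoc, ← Real.exp_add]
  congr 2
  ring

lemma aux_exp_integral_gaussian {v : ℝ≥0} (hv : v ≠ 0) {a : ℝ}
    (ha : a < (2 * (v:ℝ))⁻¹) :
    ∫ x, Real.exp (a * x ^ 2) ∂(gaussianReal 0 v)
      = (Real.sqrt (2 * π * v))⁻¹ * Real.sqrt (π / ((2 * (v:ℝ))⁻¹ - a)) := by
  have hvpos : (0:ℝ) < v := by exact_mod_cast pos_iff_ne_zero.mpr hv
  have hb : (0:ℝ) < (2 * (v:ℝ))⁻¹ - a := by linarith
  rw [aux_gaussian_integral_eq hv]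
  have h1 : ∀ x : ℝ, gaussianPDFReal 0 v x * Real.exp (a * x ^ 2)
      = (Real.sqrt (2 * π * v))⁻¹ * Real.exp (-((2 * (v:ℝ))⁻¹ - a) * x ^ 2) := by
    intro x
    rw [aux_pdf_eq hv, mul_assoc, ← Real.exp_add]
    congr 2
    ring
  simp_rw [h1]
  rw [integral_const_mul, integral_gaussian]

lemma aux_integral_llr_nonneg {α : Type*} [MeasurableSpace α] {μ ν : Measure α}
    [IsProbabilityMeasure μ] [IsProbabilityMeasure ν]
    (hμν : μ ≪ ν) (h_int : Integrable (llr μ ν) μ) :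
    0 ≤ ∫ x, llr μ ν x ∂μ := by
  have h_exp : (fun x ↦ Real.exp (- llr μ ν x)) =ᵐ[μ] fun x ↦ (ν.rnDeriv μ x).toReal :=
    exp_neg_llr hμν
  have h_int2 : Integrable (fun x ↦ (ν.rnDeriv μ x).toReal) μ :=
    Measure.integrable_toReal_rnDeriv
  have hle : ∫ x, (1 - (ν.rnDeriv μ x).toReal) ∂μ ≤ ∫ x, llr μ ν x ∂μ := by
    refine integral_mono_ae ((integrable_const 1).sub h_int2) h_int ?_
    filter_upwards [h_exp] with x hx
    have h := Real.add_one_le_exp (- llr μ ν x)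
    rw [hx] at h
    linarith
  have h_eq : ∫ x, (1 - (ν.rnDeriv μ x).toReal) ∂μ
      = 1 - ∫ x, (ν.rnDeriv μ x).toReal ∂μ := by
    rw [integral_sub (integrable_const 1) h_int2]; simp
  have h_le1 : ∫ x, (ν.rnDeriv μ x).toReal ∂μ ≤ 1 := by
    calc ∫ x, (ν.rnDeriv μ x).toReal ∂μ
        = (ν Set.univ).toReal - (ν.singularPart μ Set.univ).toReal :=
          Measure.integral_toReal_rnDeriv'
      _ ≤ (ν Set.univ).toReal := by simp [ENNReal.toReal_nonneg]
      _ = 1 := by simp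
  linarith

end Aux18

/-- Kullback–Leibler divergence (in nats, as an extended real) between two measures:
the integral of the log-likelihood ratio if `μ ≪ ν` and the ratio is integrable,
and `⊤` otherwise. -/
noncomputable def klDivM {α : Type*} [MeasurableSpace α] (μ ν : Measure α) : EReal :=
  if μ ≪ ν ∧ Integrable (llr μ ν) μ then ((∫ x, llr μ ν x ∂μ : ℝ) : EReal) else ⊤

theorem statement18 {Ω : Type*} [MeasurableSpace Ω] (μ : Measure Ω) [IsProbabilityMeasure μ]
    (v : ℝ≥0) (hv : 0 < v)
    (X Z : Ω → ℝ) (hX : Measurable X) (hZ : Measurable Z)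
    (hindep : IndepFun X Z μ)
    (hZlaw : Measure.map Z μ = gaussianReal 0 v)
    (ρ : ℝ) (hXmoment : ∫ ω, (X ω) ^ 2 ∂μ = ρ)
    (hXint : Integrable (fun ω => (X ω) ^ 2) μ) :
    ((ρ / (2 * (v : ℝ)) - Real.log ((ρ + (v : ℝ)) / (v : ℝ)) / 2 : ℝ) : EReal) ≤
      klDivM (Measure.map (fun ω => X ω + Z ω) μ) (gaussianReal 0 v) := by
  have hv0 : v ≠ 0 := hv.ne'
  have hvpos : (0:ℝ) < (v:ℝ) := by exact_mod_cast hv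
  have hρ : 0 ≤ ρ := by
    rw [← hXmoment]; exact integral_nonneg fun ω ↦ sq_nonneg _
  set vr : ℝ := (v : ℝ) with hvr
  set s : ℝ := ρ + vr with hs
  have hspos : 0 < s := by simp only [hs]; linarith
  set Y : Ω → ℝ := fun ω ↦ X ω + Z ω with hYdef
  have hY : Measurable Y := hX.add hZ
  set Q : Measure ℝ := Measure.map Y μ with hQdef
  haveI hQprob : IsProbabilityMeasure Q := Measure.isProbabilityMeasure_map hY.aemeasurable
  set Q0 : Measure ℝ := gaussianReal 0 v with hQ0def
  rw [klDivM]
  split_ifs with hif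
  swap
  · exact le_top
  obtain ⟨hac, hint⟩ := hif
  rw [EReal.coe_le_coe_iff]
  -- second moments
  have hsqasm : AEStronglyMeasurable (fun x : ℝ ↦ x ^ 2) (Measure.map Z μ) :=
    (measurable_id.pow_const 2).aestronglyMeasurable
  have hZ2int : Integrable (fun ω ↦ Z ω ^ 2) μ := by
    have h := (integrable_map_measure hsqasm hZ.aemeasurable).mp
      (by rw [hZlaw]; exact aux_sq_integrable_gaussian hv0)
    exact h
  have hEZ2 : ∫ ω, Z ω ^ 2 ∂μ = vr := by
    have h := integral_map hZ.aemeasurable hsqasm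
    rw [hZlaw, aux_sq_integral_gaussian hv0] at h
    simpa using h.symm
  have hXL1 : Integrable X μ :=
    ((memLp_two_iff_integrable_sq hX.aestronglyMeasurable).mpr hXint).integrable one_le_two
  have hZL1 : Integrable Z μ :=
    ((memLp_two_iff_integrable_sq hZ.aestronglyMeasurable).mpr hZ2int).integrable one_le_two
  have hXZint : Integrable (fun ω ↦ X ω * Z ω) μ := hindep.integrable_mul hXL1 hZL1
  have hEZ : ∫ ω, Z ω ∂μ = 0 := by
    have h := integral_map hZ.aemeasurable (aestronglyMeasurable_id :
      AEStronglyMeasurable (fun x : ℝ ↦ x) (Measure.map Z μ))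
    simp only [id_eq] at h
    rw [hZlaw] at h
    have h0 : ∫ x, x ∂Q0 = 0 := aux_id_integral_gaussian hv0
    rw [h0] at h
    exact h.symm
  have hEXZ : ∫ ω, X ω * Z ω ∂μ = 0 := by
    have h : ∫ ω, X ω * Z ω ∂μ = (∫ ω, X ω ∂μ) * ∫ ω, Z ω ∂μ :=
      hindep.integral_fun_mul_eq_mul_integral hXL1.aestronglyMeasurable hZL1.aestronglyMeasurable
    rw [h, hEZ, mul_zero]
  have hY2int : Integrable (fun ω ↦ Y ω ^ 2) μ := by
    have h : Integrable (fun ω ↦ X ω ^ 2 + 2 * (X ω * Z ω) + Z ω ^ 2) μ :=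
      (hXint.add (hXZint.const_mul 2)).add hZ2int
    refine h.congr (Filter.Eventually.of_forall fun ω ↦ ?_)
    simp only [hYdef]; ring
  have hEY2 : ∫ ω, Y ω ^ 2 ∂μ = s := by
    have h1 : ∀ ω, Y ω ^ 2 = X ω ^ 2 + 2 * (X ω * Z ω) + Z ω ^ 2 := by
      intro ω; simp only [hYdef]; ring
    simp_rw [h1]
    have hint1 : Integrable (fun ω ↦ X ω ^ 2 + 2 * (X ω * Z ω)) μ :=
      hXint.add (hXZint.const_mul 2)
    rw [integral_add hint1 hZ2int, integral_add hXint (hXZint.const_mul 2),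
      integral_const_mul, hEXZ, hXmoment, hEZ2]
    simp [hs]
  have hQsqasm : AEStronglyMeasurable (fun x : ℝ ↦ x ^ 2) Q :=
    (measurable_id.pow_const 2).aestronglyMeasurable
  have hQ2int : Integrable (fun x : ℝ ↦ x ^ 2) Q := by
    rw [hQdef, integrable_map_measure hQsqasm hY.aemeasurable]
    exact hY2int
  have hEQ2 : ∫ x, x ^ 2 ∂Q = s := by
    rw [hQdef, integral_map hY.aemeasurable hQsqasm]
    simpa using hEY2
  -- the tilt
  set a : ℝ := (2 * vr)⁻¹ - (2 * s)⁻¹ with hadef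
  have ha_lt : a < (2 * vr)⁻¹ := by
    have h1 : 0 < (2 * s)⁻¹ := by positivity
    simp only [hadef]; linarith
  set f : ℝ → ℝ := fun x ↦ a * x ^ 2 with hfdef
  have hfν : Integrable (fun x ↦ Real.exp (f x)) Q0 := aux_exp_integrable_gaussian hv0 ha_lt
  have hfQ : Integrable f Q := hQ2int.const_mul a
  have hEfQ : ∫ x, f x ∂Q = a * s := by
    simp only [hfdef]
    rw [integral_const_mul, hEQ2]
  have hlog : Real.log (∫ x, Real.exp (f x) ∂Q0) = Real.log (s / vr) / 2 := by
    simp only [hfdef]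
    rw [hQ0def, aux_exp_integral_gaussian hv0 ha_lt]
    have e1 : (2 * vr)⁻¹ - a = (2 * s)⁻¹ := by simp only [hadef]; ring
    have e2 : Real.pi / (2 * s)⁻¹ = 2 * Real.pi * s := by field_simp
    rw [e1, e2]
    have hsqv : Real.sqrt (2 * Real.pi * vr) ≠ 0 := by
      refine Real.sqrt_ne_zero'.mpr ?_; positivity
    have hsqs : Real.sqrt (2 * Real.pi * s) ≠ 0 := by
      refine Real.sqrt_ne_zero'.mpr ?_; positivity
    rw [Real.log_mul (inv_ne_zero hsqv) hsqs, Real.log_inv,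
      Real.log_sqrt (by positivity), Real.log_sqrt (by positivity),
      Real.log_mul (by positivity) hspos.ne', Real.log_mul (by positivity) hvpos.ne',
      Real.log_div hspos.ne' hvpos.ne']
    ring
  haveI : NeZero Q0 := ⟨IsProbabilityMeasure.ne_zero Q0⟩
  haveI hPtilt : IsProbabilityMeasure (Q0.tilted f) := isProbabilityMeasure_tilted hfν
  have hQtilt : Q ≪ Q0.tilted f := hac.trans (absolutelyContinuous_tilted hfν)
  have hllrtilt_int : Integrable (llr Q (Q0.tilted f)) Q :=
    integrable_llr_tilted_right hac hfQ hint hfν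
  have htilt := integral_llr_tilted_right hac hfQ hfν hint
  have hnn : 0 ≤ ∫ x, llr Q (Q0.tilted f) x ∂Q := aux_integral_llr_nonneg hQtilt hllrtilt_int
  rw [htilt, hEfQ, hlog] at hnn
  have has : a * s = ρ / (2 * vr) := by
    simp only [hadef, hs]
    field_simp
    ring
  have hsv : s / vr = (ρ + vr) / vr := by rw [hs]
  rw [has, hsv] at hnn
  linarith
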